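/- Suppose (x̂, 0) ∈ A(λ, r) for some (λ, r) ∈ ℝᵐ × (0, ∞). Then x̂ is a stationary point of (NLP): there exists ξ ∈ ℝᵐ with ‖ξ‖ ≤ 1 such that ∇f(x̂) + ∇h(x̂)(λ + r ξ) = 0 and h(x̂) = 0; that is, λ + r ξ is a Lagrange multiplier associated with x̂. -/

import Mathlib

noncomputable section

open Classical in
/-- The extended-real-valued smoothing function `L̃_{λ,r}(x,t)`. -/
def Ltilde {n m : ℕ} (f : EuclideanSpace ℝ (Fin n) → ℝ)
    (h : EuclideanSpace ℝ (Fin n) → EuclideanSpace ℝ (Fin m))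
    (lam : EuclideanSpace ℝ (Fin m)) (r : ℝ)
    (x : EuclideanSpace ℝ (Fin n)) (t : ℝ) : EReal :=
  if 0 < t then
    (((f x + (inner ℝ lam (h x) : ℝ) + r / (2 * t) * ‖h x‖ ^ 2 + r / 2 * t) : ℝ) : EReal)
  else if t = 0 ∧ h x = 0 then ((f x : ℝ) : EReal)
  else ⊤

/-- The augmented dual function `q̃(λ, r) = inf_{(x,t)} L̃_{λ,r}(x,t)`. -/
def qtilde {n m : ℕ} (f : EuclideanSpace ℝ (Fin n) → ℝ)
    (h : EuclideanSpace ℝ (Fin n) → EuclideanSpace ℝ (Fin m))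
    (lam : EuclideanSpace ℝ (Fin m)) (r : ℝ) : EReal :=
  ⨅ p : EuclideanSpace ℝ (Fin n) × ℝ, Ltilde f h lam r p.1 p.2

/-- The set `A(λ, r)` of global minimizers of `L̃_{λ,r}`. -/
def Aset {n m : ℕ} (f : EuclideanSpace ℝ (Fin n) → ℝ)
    (h : EuclideanSpace ℝ (Fin n) → EuclideanSpace ℝ (Fin m))
    (lam : EuclideanSpace ℝ (Fin m)) (r : ℝ) :
    Set (EuclideanSpace ℝ (Fin n) × ℝ) :=
  {p | Ltilde f h lam r p.1 p.2 = qtilde f h lam r}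

open InnerProductSpace Filter Topology

/-- if `(x̂, 0) ∈ A(λ, r)`, then `x̂` is a stationary point of the NLP:
`h x̂ = 0` and there is `ξ` with `‖ξ‖ ≤ 1` such that
`∇f(x̂) + ∇h(x̂)(λ + r ξ) = 0`, i.e. `λ + r ξ` is a Lagrange multiplier. -/
theorem stmt10 {n m : ℕ} (f : EuclideanSpace ℝ (Fin n) → ℝ)
    (h : EuclideanSpace ℝ (Fin n) → EuclideanSpace ℝ (Fin m))
    (hf : ContDiff ℝ 2 f) (hh : ContDiff ℝ 2 h)
    (lam : EuclideanSpace ℝ (Fin m)) (r : ℝ) (hr : 0 < r)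
    (xh : EuclideanSpace ℝ (Fin n))
    (hmem : (xh, (0 : ℝ)) ∈ Aset f h lam r) :
    h xh = 0 ∧
    ∃ ξ : EuclideanSpace ℝ (Fin m), ‖ξ‖ ≤ 1 ∧
      gradient f xh + ∑ i, (lam i + r * ξ i) • gradient (fun y => h y i) xh = 0 := by
  classical
  have hfd : Differentiable ℝ f := hf.differentiable (by norm_num)
  have hhd : Differentiable ℝ h := hh.differentiable (by norm_num)
  simp only [Aset, Set.mem_setOf_eq] at hmem
  have hq_le : ∀ x t, qtilde f h lam r ≤ Ltilde f h lam r x t := fun x t =>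
    iInf_le (fun p : EuclideanSpace ℝ (Fin n) × ℝ => Ltilde f h lam r p.1 p.2) (x, t)
  -- Step 1 : h x̂ = 0
  have hx0 : h xh = 0 := by
    by_contra hne
    have h1 : Ltilde f h lam r xh 0 = ⊤ := by simp [Ltilde, hne]
    have h2 := hq_le xh 1
    rw [← hmem, h1, top_le_iff] at h2
    have h3 : Ltilde f h lam r xh 1 ≠ ⊤ := by
      unfold Ltilde
      rw [if_pos one_pos]
      exact EReal.coe_ne_top _
    exact h3 h2
  have hL0 : qtilde f h lam r = ((f xh : ℝ) : EReal) := by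
    rw [← hmem]; simp [Ltilde, hx0]
  -- Step 2 : x̂ minimizes F(x) = f x + ⟨λ, h x⟩ + r ‖h x‖
  have Hmin : ∀ x, f xh ≤ f x + (inner ℝ lam (h x) : ℝ) + r * ‖h x‖ := by
    intro x
    by_cases hzx : h x = 0
    · have h2 := hq_le x 0
      rw [hL0] at h2
      have h3 : Ltilde f h lam r x 0 = ((f x : ℝ) : EReal) := by simp [Ltilde, hzx]
      rw [h3, EReal.coe_le_coe_iff] at h2
      simpa [hzx] using h2
    · have ht : (0:ℝ) < ‖h x‖ := norm_pos_iff.mpr hzx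
      have h2 := hq_le x ‖h x‖
      rw [hL0] at h2
      have h3 : Ltilde f h lam r x ‖h x‖ =
          (((f x + (inner ℝ lam (h x) : ℝ) + r / (2 * ‖h x‖) * ‖h x‖ ^ 2 + r / 2 * ‖h x‖) : ℝ) : EReal) := by
        unfold Ltilde
        rw [if_pos ht]
      rw [h3, EReal.coe_le_coe_iff] at h2
      have h4 : r / (2 * ‖h x‖) * ‖h x‖ ^ 2 + r / 2 * ‖h x‖ = r * ‖h x‖ := by
        field_simp
        ring
      linarith
  -- basic gradient fact
  have hgrad : ∀ (g : EuclideanSpace ℝ (Fin n) → ℝ) (x d : EuclideanSpace ℝ (Fin n)),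
      (inner ℝ (gradient g x) d : ℝ) = fderiv ℝ g x d := by
    intro g x d
    rw [gradient, InnerProductSpace.toDual_symm_apply]
  set A : EuclideanSpace ℝ (Fin n) →L[ℝ] EuclideanSpace ℝ (Fin m) := fderiv ℝ h xh with hAdef
  have hAt : HasFDerivAt h A xh := (hhd xh).hasFDerivAt
  have hcoord : ∀ (i : Fin m) (d : EuclideanSpace ℝ (Fin n)),
      A d i = fderiv ℝ (fun y => h y i) xh d := by
    intro i d
    have h1 : HasFDerivAt (fun y => h y i) ((EuclideanSpace.proj i).comp A) xh :=
      (EuclideanSpace.proj (𝕜 := ℝ) i).hasFDerivAt.comp xh hAt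
    rw [h1.fderiv]
    rfl
  set A' : EuclideanSpace ℝ (Fin m) →L[ℝ] EuclideanSpace ℝ (Fin n) :=
    ContinuousLinearMap.adjoint A with hA'def
  have hadj : ∀ μ : EuclideanSpace ℝ (Fin m),
      A' μ = ∑ i, μ i • gradient (fun y => h y i) xh := by
    intro μ
    apply ext_inner_right ℝ
    intro d
    rw [hA'def, ContinuousLinearMap.adjoint_inner_left, sum_inner]
    simp only [real_inner_smul_left, hgrad]
    rw [PiLp.inner_apply]
    simp only [RCLike.inner_apply, starRingEnd_apply, star_trivial]
    exact Finset.sum_congr rfl fun i _ => by rw [hcoord, mul_comm]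
  set w : EuclideanSpace ℝ (Fin n) := gradient f xh + A' lam with hwdef
  -- Step 3 : directional derivative inequality
  have key2 : ∀ d, 0 ≤ (inner ℝ w d : ℝ) + r * ‖A d‖ := by
    intro d
    have hc : HasDerivAt (fun s : ℝ => xh + s • d) d 0 := by
      simpa using ((hasDerivAt_id (0:ℝ)).smul_const d).const_add xh
    have hx' : xh + (0:ℝ) • d = xh := by simp
    have hAt0 : HasFDerivAt h A (xh + (0:ℝ) • d) := hx'.symm ▸ hAt
    have hk : HasDerivAt (fun s : ℝ => h (xh + s • d)) (A d) 0 :=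
      hAt0.comp_hasDerivAt 0 hc
    have hft0 : HasFDerivAt f (fderiv ℝ f xh) (xh + (0:ℝ) • d) := hx'.symm ▸ (hfd xh).hasFDerivAt
    have hg1 : HasDerivAt (fun s : ℝ => f (xh + s • d)) (fderiv ℝ f xh d) 0 :=
      hft0.comp_hasDerivAt 0 hc
    have hg2 : HasDerivAt (fun s : ℝ => (inner ℝ lam (h (xh + s • d)) : ℝ))
        ((inner ℝ lam (A d) : ℝ)) 0 :=
      (innerSL ℝ lam).hasFDerivAt.comp_hasDerivAt 0 hk
    have hgsum : HasDerivAt (fun s : ℝ => f (xh + s • d) + (inner ℝ lam (h (xh + s • d)) : ℝ))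
        ((inner ℝ w d : ℝ)) 0 := by
      have heq : (inner ℝ w d : ℝ) = fderiv ℝ f xh d + (inner ℝ lam (A d) : ℝ) := by
        rw [hwdef, inner_add_left, hgrad, hA'def, ContinuousLinearMap.adjoint_inner_left]
      rw [heq]
      exact hg1.add hg2
    set g : ℝ → ℝ := fun s => f (xh + s • d) + (inner ℝ lam (h (xh + s • d)) : ℝ) with hgdef
    set k : ℝ → EuclideanSpace ℝ (Fin m) := fun s => h (xh + s • d) with hkdef
    have hg0 : g 0 = f xh := by simp [hgdef, hx0]
    have hk0 : k 0 = 0 := by simp [hkdef, hx0]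
    have t1 : Tendsto (slope g 0) (𝓝[≠] (0:ℝ)) (𝓝 (inner ℝ w d : ℝ)) :=
      hasDerivAt_iff_tendsto_slope.mp hgsum
    have t2 : Tendsto (slope k 0) (𝓝[≠] (0:ℝ)) (𝓝 (A d)) :=
      hasDerivAt_iff_tendsto_slope.mp hk
    have hsub : 𝓝[>] (0:ℝ) ≤ 𝓝[≠] (0:ℝ) :=
      nhdsWithin_mono _ (fun s hs => ne_of_gt hs)
    have hts : Tendsto (fun s => slope g 0 s + r * ‖slope k 0 s‖) (𝓝[>] (0:ℝ))
        (𝓝 ((inner ℝ w d : ℝ) + r * ‖A d‖)) :=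
      (t1.mono_left hsub).add (((t2.mono_left hsub).norm).const_mul r)
    refine ge_of_tendsto hts ?_
    filter_upwards [self_mem_nhdsWithin] with s hs
    have hs' : (0:ℝ) < s := hs
    have hm : f xh ≤ g s + r * ‖k s‖ := Hmin (xh + s • d)
    have e1 : slope g 0 s = (g s - f xh) / s := by
      rw [slope_def_field, hg0, sub_zero]
    have e2 : ‖slope k 0 s‖ = ‖k s‖ / s := by
      simp only [slope, hk0, vsub_eq_sub, sub_zero, norm_smul, norm_inv, Real.norm_eq_abs,
        abs_of_pos hs']
      rw [div_eq_inv_mul]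
    rw [e1, e2]
    have : 0 ≤ (g s - f xh + r * ‖k s‖) / s := div_nonneg (by linarith) hs'.le
    calc (0:ℝ) ≤ (g s - f xh + r * ‖k s‖) / s := this
      _ = (g s - f xh) / s + r * (‖k s‖ / s) := by ring
  -- Step 4 : linear algebra
  have hwker : ∀ d, A d = 0 → (inner ℝ w d : ℝ) = 0 := by
    intro d hd
    have h1 := key2 d
    have h2 := key2 (-d)
    rw [map_neg, norm_neg, hd] at h2
    rw [hd] at h1
    rw [inner_neg_right] at h2
    simp only [norm_zero, mul_zero, add_zero] at h1 h2
    linarith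
  have hmemrange : w ∈ LinearMap.range (A' : EuclideanSpace ℝ (Fin m) →ₗ[ℝ] EuclideanSpace ℝ (Fin n)) := by
    set U : Submodule ℝ (EuclideanSpace ℝ (Fin n)) :=
      LinearMap.range (A' : EuclideanSpace ℝ (Fin m) →ₗ[ℝ] EuclideanSpace ℝ (Fin n)) with hUdef
    have hUperp : Uᗮ = LinearMap.ker (A : EuclideanSpace ℝ (Fin n) →ₗ[ℝ] EuclideanSpace ℝ (Fin m)) := by
      ext d
      rw [Submodule.mem_orthogonal, LinearMap.mem_ker]
      simp only [ContinuousLinearMap.coe_coe]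
      constructor
      · intro hd
        apply ext_inner_right ℝ
        intro y
        rw [inner_zero_left, real_inner_comm, ← ContinuousLinearMap.adjoint_inner_left A]
        exact hd (A' y) ⟨y, rfl⟩
      · intro hd u hu
        obtain ⟨y, rfl⟩ := hu
        show (inner ℝ (A' y) d : ℝ) = 0
        rw [ContinuousLinearMap.adjoint_inner_left]
        show (inner ℝ y (A d) : ℝ) = 0
        rw [hd, inner_zero_right]
      
    have hwmem : w ∈ Uᗮᗮ := by
      rw [hUperp]
      rw [Submodule.mem_orthogonal]
      intro u hu
      rw [LinearMap.mem_ker] at hu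
      rw [real_inner_comm]
      exact hwker u hu
    rwa [Submodule.orthogonal_orthogonal] at hwmem
  obtain ⟨u, hu⟩ := hmemrange
  set V : Submodule ℝ (EuclideanSpace ℝ (Fin m)) :=
    LinearMap.range (A : EuclideanSpace ℝ (Fin n) →ₗ[ℝ] EuclideanSpace ℝ (Fin m)) with hVdef
  set u₁ : EuclideanSpace ℝ (Fin m) := (V.orthogonalProjectionOnto u : EuclideanSpace ℝ (Fin m)) with hu1def
  have hu2 : u - u₁ ∈ Vᗮ := V.sub_starProjection_mem_orthogonal u
  have hA'u2 : A' (u - u₁) = 0 := by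
    apply ext_inner_right ℝ
    intro d
    rw [hA'def, ContinuousLinearMap.adjoint_inner_left, inner_zero_left]
    rw [real_inner_comm]
    exact hu2 (A d) ⟨d, rfl⟩
  have hA'u1 : A' u₁ = w := by
    have : A' u - A' u₁ = 0 := by rw [← map_sub]; exact hA'u2
    have h2 : A' u = w := hu
    rw [h2] at this
    linear_combination (norm := module) -this
  set ξ : EuclideanSpace ℝ (Fin m) := (-(r⁻¹)) • u₁ with hxidef
  have hu1xi : u₁ = (-r) • ξ := by
    rw [hxidef, smul_smul]
    rw [show (-r) * -(r⁻¹) = r * r⁻¹ by ring, mul_inv_cancel₀ hr.ne']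
    rw [one_smul]
  have hxiV : ξ ∈ V := Submodule.smul_mem V _ (V.orthogonalProjectionOnto u).2
  obtain ⟨d₀, hd₀'⟩ := hxiV
  have hd₀ : A d₀ = ξ := hd₀'
  have hnorm : ‖ξ‖ ≤ 1 := by
    have h1 := key2 d₀
    rw [hd₀] at h1
    have h2 : (inner ℝ w d₀ : ℝ) = -r * ‖ξ‖ ^ 2 := by
      rw [← hA'u1, hA'def, ContinuousLinearMap.adjoint_inner_left, hd₀, hu1xi,
        real_inner_smul_left, real_inner_self_eq_norm_sq]
    rw [h2] at h1
    by_contra hcon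
    push_neg at hcon
    have hpos : 0 < ‖ξ‖ := lt_trans one_pos hcon
    have h5 : ‖ξ‖ * 1 < ‖ξ‖ * ‖ξ‖ := mul_lt_mul_of_pos_left hcon hpos
    have h6 : ‖ξ‖ < ‖ξ‖ ^ 2 := by rw [sq]; linarith
    have h7 : r * ‖ξ‖ < r * ‖ξ‖ ^ 2 := mul_lt_mul_of_pos_left h6 hr
    linarith
  refine ⟨hx0, ξ, hnorm, ?_⟩
  have hsum : ∑ i, (lam i + r * ξ i) • gradient (fun y => h y i) xh = A' (lam + r • ξ) := by
    rw [hadj]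
    refine Finset.sum_congr rfl fun i _ => ?_
    congr 1
  have hA'xi : A' ξ = (-(r⁻¹)) • w := by
    rw [hxidef, map_smul, hA'u1]
  have hfinal : gradient f xh + A' (lam + r • ξ) = 0 := by
    rw [map_add, map_smul, hA'xi, smul_smul,
      show r * -(r⁻¹) = -1 by rw [mul_neg, mul_inv_cancel₀ hr.ne'], neg_one_smul, hwdef]
    abel
  rw [hsum]
  exact hfinal
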